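/- A Boolean function f: {0,1}^n → {0,1} (or partial function) is not expressible as (consistent with) a single monomial, given that it has at least one positive example, if and only if there exist two positive examples x, y of f and a negative example r of f such that r is between x and y (i.e., for every coordinate i, r_i = x_i or r_i = y_i). -/
import Mathlib


/-- `x` satisfies every literal in the monomial `M`. -/
def covers {n : ℕ} (M : Finset (Fin n × Bool)) (x : Fin n → Bool) : Prop :=
  ∀ l ∈ M, x l.1 = l.2

/-- A Boolean function `f : {0,1}^n → {0,1}` with at least one positive example is
*not* expressible as a single monomial if and only if there are two positive examples
`x, y` of `f` and a negative example `r` of `f` such that `r` is between `x` and `y`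
(for every coordinate `i`, `r i = x i` or `r i = y i`). -/
theorem stmt12 {n : ℕ} (f : (Fin n → Bool) → Bool) (hpos : ∃ a, f a = true) :
    (¬ ∃ M : Finset (Fin n × Bool), ∀ x, covers M x ↔ f x = true) ↔
    (∃ x y r : Fin n → Bool, f x = true ∧ f y = true ∧ f r = false ∧
      ∀ i, r i = x i ∨ r i = y i) := by
  constructor
  · intro h
    by_contra hno
    push_neg at hno
    -- any point between two positives is positive
    have hbet : ∀ x y r : Fin n → Bool, f x = true → f y = true →
        (∀ i, r i = x i ∨ r i = y i) → f r = true := by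
      intro x y r hx hy hr
      by_contra hfr
      simp only [Bool.not_eq_true] at hfr
      obtain ⟨i, h1, h2⟩ := hno x y r hx hy hfr
      rcases hr i with h | h <;> [exact h1 h; exact h2 h]
    apply h
    refine ⟨Finset.univ.filter (fun l => ∀ a, f a = true → a l.1 = l.2), ?_⟩
    intro x
    constructor
    · intro hcov
      -- minimize Hamming distance to x among positives
      obtain ⟨a0, ha0⟩ := hpos
      have hPne : (Finset.univ.filter (fun a => f a = true)).Nonempty :=
        ⟨a0, by simp [ha0]⟩
      obtain ⟨u, huP, humin⟩ := Finset.exists_min_image _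
        (fun a => (Finset.univ.filter (fun i => a i ≠ x i)).card) hPne
      have hu : f u = true := by simpa using huP
      by_cases hux : u = x
      · rw [← hux]; exact hu
      · exfalso
        obtain ⟨i0, hi0⟩ : ∃ i, u i ≠ x i := by
          by_contra hc; push_neg at hc; exact hux (funext hc)
        -- find positive v with v i0 = x i0
        have hv : ∃ v, f v = true ∧ v i0 = x i0 := by
          by_contra hc
          push_neg at hc
          have hmem : (i0, !(x i0)) ∈ Finset.univ.filter
              (fun l : Fin n × Bool => ∀ a, f a = true → a l.1 = l.2) := by
            simp only [Finset.mem_filter, Finset.mem_univ, true_and]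
            intro a ha
            have := hc a ha
            cases hxb : x i0 <;> cases hab : a i0 <;> simp_all
          have := hcov _ hmem
          simp at this
        obtain ⟨v, hvpos, hvi0⟩ := hv
        set w : Fin n → Bool := fun i => if u i = x i then u i else v i with hw
        have hwpos : f w = true := by
          apply hbet u v w hu hvpos
          intro i
          by_cases hui : u i = x i <;> simp [hw, hui]
        have hsub : (Finset.univ.filter (fun i => w i ≠ x i)) ⊂
            (Finset.univ.filter (fun i => u i ≠ x i)) := by
          constructor
          · intro i hi
            simp only [Finset.mem_filter, Finset.mem_univ, true_and] at hi ⊢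
            intro hui
            exact hi (by simp [hw, hui])
          · intro hsub'
            have hi0mem : i0 ∈ Finset.univ.filter (fun i => u i ≠ x i) := by
              simp [hi0]
            have := hsub' hi0mem
            simp only [Finset.mem_filter, Finset.mem_univ, true_and] at this
            apply this
            simp [hw, hi0, hvi0]
        have hlt := Finset.card_lt_card hsub
        have hge := humin w (by simp [hwpos])
        omega
    · intro hx l hl
      simp only [Finset.mem_filter, Finset.mem_univ, true_and] at hl
      exact hl x hx
  · rintro ⟨x, y, r, hx, hy, hr, hbet⟩ ⟨M, hM⟩
    have hcx : covers M x := (hM x).mpr hx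
    have hcy : covers M y := (hM y).mpr hy
    have hcr : covers M r := by
      intro l hl
      rcases hbet l.1 with h | h
      · rw [h]; exact hcx l hl
      · rw [h]; exact hcy l hl
    have := (hM r).mp hcr
    simp [hr] at this
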